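/- Let A be an n×n real matrix, λ > 0, and P an n×n symmetric positive definite matrix with AᵀP + PA + 2λP ⪯ 0. Let d : [0,∞) → ℝⁿ be continuous with d(t) → 0 as t → ∞. If z : [0,∞) → ℝⁿ is differentiable with ż(t) = A z(t) + d(t) for all t ≥ 0, then z(t) → 0 as t → ∞. -/

import Mathlib

open Matrix Filter Real Topology

noncomputable section

/-- `M ⪯ 0`: a real matrix is negative semidefinite iff `-M` is positive semidefinite. -/
def Matrix.NegSemidef {n : Type*} [Fintype n] (M : Matrix n n ℝ) : Prop := (-M).PosSemidef

/-- `M ≺ 0`: a real matrix is negative definite iff `-M` is positive definite. -/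
def Matrix.NegDef {n : Type*} [Fintype n] (M : Matrix n n ℝ) : Prop := (-M).PosDef

set_option maxHeartbeats 1000000 in
/-- A contracting linear system driven by a vanishing input converges to
zero: if `AᵀP + PA + 2λP ⪯ 0` with `P ≻ 0`, `λ > 0`, `d` is continuous with `d(t) → 0`,
and `ż(t) = Az(t) + d(t)` for all `t ≥ 0`, then `z(t) → 0` as `t → ∞`. -/
theorem stmt_10 (n : ℕ)
    (A : Matrix (Fin n) (Fin n) ℝ) (lam : ℝ) (hlam : 0 < lam)
    (P : Matrix (Fin n) (Fin n) ℝ) (hP : P.PosDef)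
    (hLMI : (Aᵀ * P + P * A + (2 * lam) • P).NegSemidef)
    (d : ℝ → EuclideanSpace ℝ (Fin n)) (hd : Continuous d)
    (hd0 : Tendsto d atTop (nhds 0))
    (z : ℝ → EuclideanSpace ℝ (Fin n))
    (hz : ∀ t, 0 ≤ t → HasDerivAt z ((WithLp.equiv 2 (Fin n → ℝ)).symm (A.mulVec (z t)) + d t) t) :
    Tendsto z atTop (nhds 0) := by
  classical
  have hPS : P.PosSemidef := hP.posSemidef
  set S : Matrix (Fin n) (Fin n) ℝ := open scoped MatrixOrder in CFC.sqrt P with hSdef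
  have hSherm : Sᴴ = S := by
    open scoped MatrixOrder in exact (CFC.sqrt_nonneg P).posSemidef.1
  have hSS : S * S = P := by
    open scoped MatrixOrder in exact CFC.sqrt_mul_sqrt_self P hPS.nonneg
  have hdet : IsUnit S.det := by
    have h1 : (0 : ℝ) < P.det := hP.det_pos
    rw [← hSS, Matrix.det_mul] at h1
    have : S.det ≠ 0 := by
      intro h; rw [h] at h1; simp at h1
    exact isUnit_iff_ne_zero.2 this
  have hSinv : S⁻¹ * S = 1 := Matrix.nonsing_inv_mul S hdet
  -- symmetric dotProduct identity for S
  have hdotS : ∀ v w : Fin n → ℝ, v ⬝ᵥ (S *ᵥ w) = (S *ᵥ v) ⬝ᵥ w := by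
    intro v w
    rw [Matrix.dotProduct_mulVec, ← Matrix.vecMul_transpose]
    congr 1
    rw [show Sᵀ = S from hSherm]
  -- key quadratic inequality
  have key : ∀ x : Fin n → ℝ,
      (S *ᵥ x) ⬝ᵥ (S *ᵥ (A *ᵥ x)) + lam * ((S *ᵥ x) ⬝ᵥ (S *ᵥ x)) ≤ 0 := by
    intro x
    have h2 := Matrix.PosSemidef.dotProduct_mulVec_nonneg hLMI x
    have hstar : (star x : Fin n → ℝ) = x := by simp
    rw [hstar] at h2
    have hexp : x ⬝ᵥ ((-(Aᵀ * P + P * A + (2 * lam) • P)) *ᵥ x)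
        = -(x ⬝ᵥ ((Aᵀ * P) *ᵥ x) + x ⬝ᵥ ((P * A) *ᵥ x) + (2 * lam) * (x ⬝ᵥ (P *ᵥ x))) := by
      simp [Matrix.add_mulVec, Matrix.neg_mulVec, dotProduct_add, Matrix.smul_mulVec,
        dotProduct_smul, smul_eq_mul]
      try ring
    rw [hexp] at h2
    have e1 : x ⬝ᵥ ((Aᵀ * P) *ᵥ x) = (S *ᵥ (A *ᵥ x)) ⬝ᵥ (S *ᵥ x) := by
      rw [← Matrix.mulVec_mulVec, Matrix.dotProduct_mulVec (v := x), Matrix.vecMul_transpose,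
        ← hSS, ← Matrix.mulVec_mulVec, hdotS]
    have e2 : x ⬝ᵥ ((P * A) *ᵥ x) = (S *ᵥ x) ⬝ᵥ (S *ᵥ (A *ᵥ x)) := by
      rw [← Matrix.mulVec_mulVec, ← hSS, ← Matrix.mulVec_mulVec, hdotS]
    have e3 : x ⬝ᵥ (P *ᵥ x) = (S *ᵥ x) ⬝ᵥ (S *ᵥ x) := by
      rw [← hSS, ← Matrix.mulVec_mulVec, hdotS]
    rw [e1, e2, e3, dotProduct_comm] at h2
    nlinarith [h2]
  -- continuous linear maps
  set TS : EuclideanSpace ℝ (Fin n) →L[ℝ] EuclideanSpace ℝ (Fin n) :=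
    Matrix.toEuclideanCLM (𝕜 := ℝ) S with hTSdef
  set TSi : EuclideanSpace ℝ (Fin n) →L[ℝ] EuclideanSpace ℝ (Fin n) :=
    Matrix.toEuclideanCLM (𝕜 := ℝ) S⁻¹ with hTSidef
  have hTSi : ∀ v : EuclideanSpace ℝ (Fin n), TSi (TS v) = v := by
    intro v
    have h1 : TSi * TS = 1 := by
      rw [hTSdef, hTSidef, ← _root_.map_mul, hSinv, _root_.map_one]
    have := congrArg (fun f : EuclideanSpace ℝ (Fin n) →L[ℝ] EuclideanSpace ℝ (Fin n) => f v) h1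
    simpa [ContinuousLinearMap.mul_apply] using this
  have hTSapp : ∀ x : Fin n → ℝ,
      TS ((WithLp.equiv 2 (Fin n → ℝ)).symm x) = (WithLp.equiv 2 (Fin n → ℝ)).symm (S *ᵥ x) :=
    fun x => Matrix.toEuclideanCLM_toLp S x
  have hinner : ∀ x y : Fin n → ℝ,
      (inner ℝ ((WithLp.equiv 2 (Fin n → ℝ)).symm x) ((WithLp.equiv 2 (Fin n → ℝ)).symm y) : ℝ)
        = x ⬝ᵥ y := by
    intro x y
    simp [PiLp.inner_apply, RCLike.inner_apply, dotProduct, mul_comm]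
  -- the rescaled trajectory
  set w : ℝ → EuclideanSpace ℝ (Fin n) := fun t => TS (z t) with hwdef
  set u : ℝ → EuclideanSpace ℝ (Fin n) := fun t => Real.exp (lam * t) • w t with hudef
  set uder : ℝ → EuclideanSpace ℝ (Fin n) := fun t =>
    Real.exp (lam * t) • (TS ((WithLp.equiv 2 (Fin n → ℝ)).symm (A *ᵥ (z t))) + TS (d t)) +
      (Real.exp (lam * t) * lam) • w t
    with huderdef
  have hu' : ∀ t, 0 ≤ t → HasDerivAt u (uder t) t := by
    intro t ht
    have hw' : HasDerivAt w (TS ((WithLp.equiv 2 (Fin n → ℝ)).symm (A *ᵥ (z t))) + TS (d t)) t := by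
      have := TS.hasFDerivAt.comp_hasDerivAt t (hz t ht)
      simp [hwdef, Function.comp, map_add] at this
      exact this
    have hE : HasDerivAt (fun s => Real.exp (lam * s)) (Real.exp (lam * t) * lam) t := by
      have h1 : HasDerivAt (fun s : ℝ => lam * s) lam t := by
        simpa using (hasDerivAt_id t).const_mul lam
      exact (Real.hasDerivAt_exp (lam * t)).comp t h1
    exact hE.smul hw'
  -- inner product bound on the derivative
  have hkeyE : ∀ t, (inner ℝ (w t) (TS ((WithLp.equiv 2 (Fin n → ℝ)).symm (A *ᵥ (z t)))) : ℝ)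
      + lam * (inner ℝ (w t) (w t) : ℝ) ≤ 0 := by
    intro t
    have h1 : w t = (WithLp.equiv 2 (Fin n → ℝ)).symm
        (S *ᵥ ((WithLp.equiv 2 (Fin n → ℝ)) (z t))) := hTSapp _
    have h2 : TS ((WithLp.equiv 2 (Fin n → ℝ)).symm (A *ᵥ (z t)))
        = (WithLp.equiv 2 (Fin n → ℝ)).symm (S *ᵥ (A *ᵥ (z t))) := hTSapp _
    rw [h1, h2, hinner, hinner]
    exact key ((WithLp.equiv 2 (Fin n → ℝ)) (z t))
  -- Main Grönwall-type estimate
  have main : ∀ a M, 0 ≤ a → 0 ≤ M → (∀ s, a ≤ s → ‖TS (d s)‖ ≤ M) → ∀ t, a ≤ t →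
      ‖u t‖ ≤ ‖u a‖ + M / lam * (Real.exp (lam * t) - Real.exp (lam * a)) := by
    intro a M ha hM hMd t hat
    set B : ℝ → ℝ := fun s => ‖u a‖ + M / lam * (Real.exp (lam * s) - Real.exp (lam * a))
      with hBdef
    set B' : ℝ → ℝ := fun s => M * Real.exp (lam * s) with hB'def
    have hB : ∀ s, HasDerivAt B (B' s) s := by
      intro s
      have h1 : HasDerivAt (fun r : ℝ => lam * r) lam s := by
        simpa using (hasDerivAt_id s).const_mul lam
      have h2 : HasDerivAt (fun r => Real.exp (lam * r)) (Real.exp (lam * s) * lam) s :=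
        (Real.hasDerivAt_exp (lam * s)).comp s h1
      have h3 := ((h2.sub_const (Real.exp (lam * a))).const_mul (M / lam)).const_add ‖u a‖
      have heq : M / lam * (Real.exp (lam * s) * lam) = B' s := by
        simp only [hB'def]
        field_simp
      rw [heq] at h3
      exact h3
    have hcont : ContinuousOn (fun s => ‖u s‖) (Set.Icc a t) := by
      intro s hs
      exact ((hu' s (le_trans ha hs.1)).continuousAt.norm).continuousWithinAt
    have bound : ∀ x ∈ Set.Ico a t, ∀ r, B' x < r →
        ∃ᶠ y in 𝓝[>] x, slope (fun s => ‖u s‖) x y < r := by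
      intro x hx r hr
      have hx0 : (0 : ℝ) ≤ x := le_trans ha hx.1
      have hgB : Real.exp (lam * x) * ‖TS (d x)‖ ≤ B' x := by
        simp only [hB'def]
        calc Real.exp (lam * x) * ‖TS (d x)‖ ≤ Real.exp (lam * x) * M :=
              mul_le_mul_of_nonneg_left (hMd x hx.1) (Real.exp_pos _).le
          _ = M * Real.exp (lam * x) := mul_comm _ _
      by_cases hux : u x = 0
      · -- u x = 0, hence z x = 0
        have hwx : w x = 0 := by
          have h := hux
          simp only [hudef, smul_eq_zero] at h
          rcases h with h | h
          · exact absurd h (Real.exp_ne_zero _)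
          · exact h
        have hzx : z x = 0 := by
          have := congrArg TSi hwx
          simp only [hwdef] at this
          rw [hTSi] at this
          simpa using this
        have hAzx : (WithLp.equiv 2 (Fin n → ℝ)).symm (A *ᵥ (z x)) = 0 := by
          rw [hzx]
          show (WithLp.equiv 2 (Fin n → ℝ)).symm (A *ᵥ (0 : Fin n → ℝ)) = 0
          simp
        have huder : uder x = Real.exp (lam * x) • TS (d x) := by
          simp only [huderdef]
          simp [hwx, hAzx]
        have hnorm : ‖uder x‖ < r := by
          rw [huder, norm_smul, Real.norm_eq_abs, abs_of_pos (Real.exp_pos _)]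
          exact lt_of_le_of_lt hgB hr
        exact (hu' x hx0).hasDerivWithinAt.liminf_right_slope_norm_le hnorm
      · -- u x ≠ 0 : the norm is differentiable
        have hq : HasDerivAt (fun s => (inner ℝ (u s) (u s) : ℝ))
            ((inner ℝ (u x) (uder x) : ℝ) + (inner ℝ (uder x) (u x) : ℝ)) x :=
          (hu' x hx0).inner ℝ (hu' x hx0)
        have hnx : (0:ℝ) < ‖u x‖ := norm_pos_iff.2 hux
        have hqpos : (0 : ℝ) < (inner ℝ (u x) (u x) : ℝ) := by
          rw [real_inner_self_eq_norm_mul_norm]; exact mul_pos hnx hnx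
        have hsq : HasDerivAt (fun s => Real.sqrt ((inner ℝ (u s) (u s) : ℝ)))
            (1 / (2 * Real.sqrt ((inner ℝ (u x) (u x) : ℝ))) *
              ((inner ℝ (u x) (uder x) : ℝ) + (inner ℝ (uder x) (u x) : ℝ))) x :=
          (Real.hasDerivAt_sqrt hqpos.ne').comp x hq
        have hfun : (fun s => ‖u s‖) = fun s => Real.sqrt ((inner ℝ (u s) (u s) : ℝ)) := by
          funext s
          rw [real_inner_self_eq_norm_mul_norm, Real.sqrt_mul_self (norm_nonneg _)]
        have hsqx : Real.sqrt ((inner ℝ (u x) (u x) : ℝ)) = ‖u x‖ := by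
          rw [real_inner_self_eq_norm_mul_norm, Real.sqrt_mul_self (norm_nonneg _)]
        set D : ℝ := 1 / (2 * Real.sqrt ((inner ℝ (u x) (u x) : ℝ))) *
            ((inner ℝ (u x) (uder x) : ℝ) + (inner ℝ (uder x) (u x) : ℝ)) with hDdef
        have hD : HasDerivAt (fun s => ‖u s‖) D x := by
          rw [hfun]; exact hsq
        have hDval : D = (inner ℝ (u x) (uder x) : ℝ) / ‖u x‖ := by
          rw [hDdef, hsqx, real_inner_comm (uder x) (u x)]
          field_simp
          ring
        have hDle : D ≤ B' x := by
          rw [hDval]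
          rw [div_le_iff₀ hnx]
          -- bound inner ℝ (u x) (uder x)
          have hsplit : (inner ℝ (u x) (uder x) : ℝ)
              = Real.exp (lam * x) * Real.exp (lam * x) *
                  ((inner ℝ (w x) (TS ((WithLp.equiv 2 (Fin n → ℝ)).symm (A *ᵥ (z x)))) : ℝ)
                    + lam * (inner ℝ (w x) (w x) : ℝ))
                + Real.exp (lam * x) * (inner ℝ (u x) (TS (d x)) : ℝ) := by
            simp only [hudef, huderdef]
            simp only [inner_add_right, real_inner_smul_left, real_inner_smul_right]
            ring
          have h1 : (inner ℝ (u x) (TS (d x)) : ℝ) ≤ ‖u x‖ * ‖TS (d x)‖ :=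
            real_inner_le_norm _ _
          have h2 := hkeyE x
          have h3 : (inner ℝ (u x) (uder x) : ℝ) ≤ Real.exp (lam * x) * (‖u x‖ * ‖TS (d x)‖) := by
            rw [hsplit]
            nlinarith [Real.exp_pos (lam * x)]
          calc (inner ℝ (u x) (uder x) : ℝ) ≤ Real.exp (lam * x) * (‖u x‖ * ‖TS (d x)‖) := h3
            _ = (Real.exp (lam * x) * ‖TS (d x)‖) * ‖u x‖ := by ring
            _ ≤ B' x * ‖u x‖ := mul_le_mul_of_nonneg_right hgB (norm_nonneg _)
        have htends : Tendsto (slope (fun s => ‖u s‖) x) (𝓝[>] x) (𝓝 D) := by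
          have h := hasDerivAt_iff_tendsto_slope.1 hD
          exact h.mono_left (nhdsWithin_mono x fun y hy => (ne_of_lt hy).symm)
        have hev : ∀ᶠ y in 𝓝[>] x, slope (fun s => ‖u s‖) x y < r :=
          htends.eventually_lt_const (lt_of_le_of_lt hDle hr)
        exact hev.frequently
    have hres := image_le_of_liminf_slope_right_le_deriv_boundary hcont
      (by simp only [hBdef]; simp)
      (fun s _ => (hB s).continuousAt.continuousWithinAt)
      (fun s _ => (hB s).hasDerivWithinAt) bound
    exact hres ⟨hat, le_refl t⟩
  -- conclude w → 0
  have hw0 : Tendsto w atTop (𝓝 0) := by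
    rw [NormedAddCommGroup.tendsto_nhds_zero]
    intro ε hε
    have hTd0 : Tendsto (fun t => ‖TS (d t)‖) atTop (𝓝 0) := by
      have h1 : Tendsto (fun t => TS (d t)) atTop (𝓝 (TS 0)) :=
        (TS.continuous.tendsto 0).comp hd0
      rw [_root_.map_zero] at h1
      simpa using h1.norm
    have hM : (0:ℝ) < lam * (ε / 4) := by positivity
    obtain ⟨a0, ha0⟩ := eventually_atTop.1 (hTd0.eventually_lt_const hM)
    set a : ℝ := max a0 0 with hadef
    have ha : (0:ℝ) ≤ a := le_max_right _ _
    have hMd : ∀ s, a ≤ s → ‖TS (d s)‖ ≤ lam * (ε / 4) :=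
      fun s hs => (ha0 s (le_trans (le_max_left _ _) hs)).le
    have hmain := main a (lam * (ε / 4)) ha hM.le hMd
    have hMlam : lam * (ε / 4) / lam = ε / 4 := by
      field_simp
    have hexp : Tendsto (fun t : ℝ => Real.exp (lam * t)) atTop atTop :=
      Real.tendsto_exp_atTop.comp (tendsto_id.const_mul_atTop hlam)
    have hsmall : Tendsto (fun t => ‖u a‖ * (Real.exp (lam * t))⁻¹) atTop (𝓝 0) := by
      have h := hexp.inv_tendsto_atTop
      simpa using h.const_mul ‖u a‖
    have hev2 : ∀ᶠ t in atTop, ‖u a‖ * (Real.exp (lam * t))⁻¹ < ε / 4 := by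
      have hq : (0:ℝ) < ε / 4 := by positivity
      exact hsmall.eventually_lt_const hq
    filter_upwards [hev2, eventually_ge_atTop a] with t h2 h1
    have hut := hmain t h1
    have hepos : (0:ℝ) < Real.exp (lam * t) := Real.exp_pos _
    have hwt : ‖w t‖ = ‖u t‖ * (Real.exp (lam * t))⁻¹ := by
      have hh : ‖u t‖ = Real.exp (lam * t) * ‖w t‖ := by
        simp only [hudef]
        rw [norm_smul, Real.norm_eq_abs, abs_of_pos hepos]
      rw [hh]
      field_simp
    rw [hwt]
    have hub : ‖u t‖ ≤ ‖u a‖ + ε / 4 * Real.exp (lam * t) := by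
      refine le_trans hut ?_
      rw [hMlam]
      nlinarith [Real.exp_pos (lam * a)]
    calc ‖u t‖ * (Real.exp (lam * t))⁻¹
        ≤ (‖u a‖ + ε / 4 * Real.exp (lam * t)) * (Real.exp (lam * t))⁻¹ := by
          apply mul_le_mul_of_nonneg_right hub
          positivity
      _ = ‖u a‖ * (Real.exp (lam * t))⁻¹ + ε / 4 := by
          rw [add_mul, mul_assoc, mul_inv_cancel₀ hepos.ne', mul_one]
      _ < ε / 4 + ε / 4 := by linarith
      _ < ε := by linarith
  -- conclude z → 0
  have hz0 : Tendsto (fun t => TSi (w t)) atTop (𝓝 (TSi 0)) :=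
    (TSi.continuous.tendsto 0).comp hw0
  rw [_root_.map_zero] at hz0
  have hfin : (fun t => TSi (w t)) = z := by
    funext t
    simp only [hwdef]
    exact hTSi (z t)
  rwa [hfin] at hz0
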